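/- arXiv:2105.03146 — 2 statements merged into one kernel-verified Lean document; each statement's English description precedes it below -/
import Mathlib

section
/- For every graph G=(V,E,b,c)∈𝒢^KP, Katz prestige defined as the Cesàro limit KP_v(G)=lim_{T→∞} Σ_{t=0}^T p^1_{v,G}(t)/T satisfies the Katz prestige recursive equation KP_v(G) = Σ_{(u,v)∈E} (c(u,v)/deg⁺_u(G))·KP_u(G) for every node v∈V (sum over incoming edges of v), and moreover Σ_{v∈V} KP_v(G) = Σ_{v∈V} b(v). -/
open Filter

attribute [local instance] Classical.propDecidable

/-- A (directed, weighted) graph `G=(V,E,b,c)`: a finite set of nodes `V ⊆ ℕ`,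
a set of directed edges `E ⊆ V × V` (self-loops allowed), node weights `b` and
edge weights `c` (stored as total functions, zero outside `V` resp. `E`). -/
structure WGraph where
  V : Finset ℕ
  E : Finset (ℕ × ℕ)
  b : ℕ → ℝ
  c : ℕ × ℕ → ℝ

namespace WGraph

/-- Well-formedness of a graph: edges connect nodes, node weights are nonnegative,
edge weights are positive, and the weight functions vanish outside `V` resp. `E`. -/
def Valid (G : WGraph) : Prop :=
  (∀ e ∈ G.E, e.1 ∈ G.V ∧ e.2 ∈ G.V) ∧
  (∀ v, 0 ≤ G.b v) ∧ (∀ v, v ∉ G.V → G.b v = 0) ∧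
  (∀ e ∈ G.E, 0 < G.c e) ∧ (∀ e, e ∉ G.E → G.c e = 0)

/-- Out-degree `deg⁺_v(G)`: the total weight of outgoing edges of `v`. -/
noncomputable def degOut (G : WGraph) (v : ℕ) : ℝ :=
  ∑ e ∈ G.E.filter (fun e => e.1 = v), G.c e

/-- `ω` is a walk of length `t ≥ 1` in `G`. -/
def IsWalk (G : WGraph) (t : ℕ) (ω : ℕ → ℕ) : Prop :=
  1 ≤ t ∧ ∀ i < t, (ω i, ω (i + 1)) ∈ G.E

/-- `v` is a successor of `u` (and `u` a predecessor of `v`):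
some walk starts at `u` and ends at `v`. -/
def Succ (G : WGraph) (u v : ℕ) : Prop :=
  ∃ t ω, G.IsWalk t ω ∧ ω 0 = u ∧ ω t = v

/-- `G` is strongly connected: `S(v) = V` for every node `v`. -/
def StronglyConnected (G : WGraph) : Prop :=
  ∀ u ∈ G.V, ∀ v ∈ G.V, G.Succ u v

/-- Membership in the class `𝒢^KP` of (disjoint) sums of strongly connected graphs,
characterized by: every node lies on a cycle, and the start of every edge
is reachable back from its end. -/
def InGKP (G : WGraph) : Prop :=
  G.Valid ∧ (∀ v ∈ G.V, G.Succ v v) ∧ (∀ e ∈ G.E, G.Succ e.2 e.1)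

/-- The adjacency matrix of `G`: `A_{u,v} = c(v,u)` if `(v,u) ∈ E` and `0` otherwise. -/
noncomputable def adjMatrix (G : WGraph) : Matrix {v // v ∈ G.V} {v // v ∈ G.V} ℝ :=
  fun u v => if ((v : ℕ), (u : ℕ)) ∈ G.E then G.c ((v : ℕ), (u : ℕ)) else 0

/-- The principal eigenvalue `λ`: the largest real eigenvalue of the adjacency matrix. -/
noncomputable def principalEig (G : WGraph) : ℝ :=
  sSup {r : ℝ | ∃ x : {v // v ∈ G.V} → ℝ, x ≠ 0 ∧ G.adjMatrix.mulVec x = r • x}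

/-- The strongly connected component of `v` (as an induced subgraph),
for graphs in `𝒢^KP`. -/
noncomputable def component (G : WGraph) (v : ℕ) : WGraph where
  V := G.V.filter (fun u => G.Succ v u)
  E := G.E.filter (fun e => G.Succ v e.1 ∧ G.Succ v e.2)
  b := fun u => if u ∈ G.V ∧ G.Succ v u then G.b u else 0
  c := fun e => if e ∈ G.E ∧ G.Succ v e.1 ∧ G.Succ v e.2 then G.c e else 0

/-- Membership in the class `𝒢^EV` of sums of strongly connected graphs
all having the same principal eigenvalue. -/
def InGEV (G : WGraph) : Prop :=
  G.InGKP ∧ ∀ v ∈ G.V, (G.component v).principalEig = G.principalEig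

/-- Membership in the class `𝒢^{K(a)}` of graphs whose principal eigenvalue
satisfies `λ < 1/a` (expressed as `a * λ < 1`). -/
def InGK (a : ℝ) (G : WGraph) : Prop := G.Valid ∧ a * G.principalEig < 1

/-- `G` is `x`-out-regular for some `x > 0`. -/
def OutRegular (G : WGraph) : Prop :=
  ∃ x : ℝ, 0 < x ∧ ∀ v ∈ G.V, G.degOut v = x

/-- `G` is semi-out-regular: every node has out-degree `r` or `0`, for some fixed `r > 0`. -/
def SemiOutRegular (G : WGraph) : Prop :=
  ∃ r : ℝ, 0 < r ∧ ∀ v ∈ G.V, G.degOut v = r ∨ G.degOut v = 0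

/-- The distributed process: `p^a_{v,G}(t)` is the sum, over all walks `ω` of length `t`
ending at `v`, of `b(ω(0)) · ∏_{i<t} a·c(ω(i),ω(i+1))/deg⁺_{ω(i)}(G)`
(for `t = 0` this is `b(v)` for `v ∈ V`). -/
noncomputable def pProc (a : ℝ) (G : WGraph) (t : ℕ) (v : ℕ) : ℝ :=
  ∑ ω ∈ (Fintype.piFinset (fun _ : Fin (t + 1) => G.V)).filter
      (fun ω => ω (Fin.last t) = v ∧ ∀ i : Fin t, (ω i.castSucc, ω i.succ) ∈ G.E),
    G.b (ω 0) * ∏ i : Fin t,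
      a * G.c (ω i.castSucc, ω i.succ) / G.degOut (ω i.castSucc)

/-- The parallel process: `w^a_{v,G}(t)` is the sum, over all walks `ω` of length `t`
ending at `v`, of `b(ω(0)) · ∏_{i<t} a·c(ω(i),ω(i+1))`
(for `t = 0` this is `b(v)` for `v ∈ V`). -/
noncomputable def wProc (a : ℝ) (G : WGraph) (t : ℕ) (v : ℕ) : ℝ :=
  ∑ ω ∈ (Fintype.piFinset (fun _ : Fin (t + 1) => G.V)).filter
      (fun ω => ω (Fin.last t) = v ∧ ∀ i : Fin t, (ω i.castSucc, ω i.succ) ∈ G.E),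
    G.b (ω 0) * ∏ i : Fin t, a * G.c (ω i.castSucc, ω i.succ)

/-- PageRank with decay factor `a`: `PR^a_v(G) = Σ_{t=0}^∞ p^a_{v,G}(t)`. -/
noncomputable def PageRank (a : ℝ) (G : WGraph) (v : ℕ) : ℝ := ∑' t : ℕ, pProc a G t v

/-- Katz centrality with decay factor `a`: `K^a_v(G) = Σ_{t=0}^∞ w^a_{v,G}(t)`. -/
noncomputable def Katz (a : ℝ) (G : WGraph) (v : ℕ) : ℝ := ∑' t : ℕ, wProc a G t v

/-- Katz prestige: the Cesàro limit `KP_v(G) = lim_{T→∞} Σ_{t=0}^T p^1_{v,G}(t)/T`. -/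
noncomputable def KP (G : WGraph) (v : ℕ) : ℝ :=
  limUnder atTop (fun T : ℕ => (∑ t ∈ Finset.range (T + 1), pProc 1 G t v) / (T : ℝ))

/-- Eigenvector centrality: the Cesàro limit
`EV_v(G) = lim_{T→∞} Σ_{t=0}^T w^{1/λ}_{v,G}(t)/T`. -/
noncomputable def EV (G : WGraph) (v : ℕ) : ℝ :=
  limUnder atTop
    (fun T : ℕ => (∑ t ∈ Finset.range (T + 1), wProc (1 / G.principalEig) G t v) / (T : ℝ))

/-- The sum `G + G'` of two graphs (intended for disjoint node sets). -/
noncomputable def gsum (G G' : WGraph) : WGraph where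
  V := G.V ∪ G'.V
  E := G.E ∪ G'.E
  b := fun v => G.b v + G'.b v
  c := fun e => G.c e + G'.c e

/-- The graph `(V, E ∖ {e₀}, b, c)`. -/
noncomputable def deleteEdge (G : WGraph) (e₀ : ℕ × ℕ) : WGraph where
  V := G.V
  E := G.E.erase e₀
  b := G.b
  c := fun e => if e = e₀ then 0 else G.c e

/-- Multiply the weights of all outgoing edges of `u` by `x`. -/
noncomputable def scaleOut (G : WGraph) (u : ℕ) (x : ℝ) : WGraph where
  V := G.V
  E := G.E
  b := G.b
  c := fun e => if e.1 = u then x * G.c e else G.c e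

/-- Edge compensation operation at node `u` with constant `x`: multiply the weights of the
non-loop outgoing edges of `u` by `x`, divide `b(u)` and the weights of the non-loop
incoming edges of `u` by `x`. -/
noncomputable def compensate (G : WGraph) (u : ℕ) (x : ℝ) : WGraph where
  V := G.V
  E := G.E
  b := fun v => if v = u then G.b v / x else G.b v
  c := fun e =>
    if e = (u, u) then G.c e
    else if e.1 = u then x * G.c e
    else if e.2 = u then G.c e / x
    else G.c e

/-- Replace the node weights of `G` by `b'`. -/
def withB (G : WGraph) (b' : ℕ → ℝ) : WGraph := ⟨G.V, G.E, b', G.c⟩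

/-- The graph `(V, E, x·b, c)`. -/
def scaleB (G : WGraph) (x : ℝ) : WGraph := G.withB (fun v => x * G.b v)

end WGraph

/-- Proportional combining `C^F_{u→w}(G)`: scale the weights of the outgoing edges of `u` by
`F_u(G)/(F_u(G)+F_w(G))` and of `w` by `F_w(G)/(F_u(G)+F_w(G))`, then merge `u` into `w`
(delete `u`, redirect its incoming and outgoing edges to `w`, summing weights of parallel
edges, and add `b(u)` to `b(w)`). -/
noncomputable def combine (F : WGraph → ℕ → ℝ) (G : WGraph) (u w : ℕ) : WGraph :=
  let m : ℕ → ℕ := fun x => if x = u then w else x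
  let scale : ℕ × ℕ → ℝ := fun e =>
    (if e.1 = u then F G u / (F G u + F G w)
     else if e.1 = w then F G w / (F G u + F G w) else 1) * G.c e
  { V := G.V.erase u
    E := G.E.image (fun e => (m e.1, m e.2))
    b := fun v => if v = u then 0 else if v = w then G.b u + G.b w else G.b v
    c := fun e' =>
      if e' ∈ G.E.image (fun e => (m e.1, m e.2)) then
        ∑ e ∈ G.E.filter (fun e => (m e.1, m e.2) = e'), scale e
      else 0 }

/-- Locality (LOC), relative to the domain class `D`. -/
def LOC (D : WGraph → Prop) (F : WGraph → ℕ → ℝ) : Prop :=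
  ∀ G G' : WGraph, Disjoint G.V G'.V → D G → D G' → D (G.gsum G') →
    ∀ v ∈ G.V, F (G.gsum G') v = F G v

/-- Edge Deletion (ED), relative to the domain class `D`. -/
def ED (D : WGraph → Prop) (F : WGraph → ℕ → ℝ) : Prop :=
  ∀ G : WGraph, D G → ∀ e ∈ G.E, D (G.deleteEdge e) →
    ∀ v ∈ G.V, ¬ G.Succ e.1 v → F (G.deleteEdge e) v = F G v

/-- Node Combination (NC), relative to the domain class `D`. -/
def NC (D : WGraph → Prop) (F : WGraph → ℕ → ℝ) : Prop :=
  ∀ G : WGraph, D G → ∀ u ∈ G.V, ∀ w ∈ G.V, u ≠ w →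
    G.degOut u = G.degOut w →
    (∀ s, G.Succ u s ∨ G.Succ w s → G.degOut s = G.degOut u) →
    D (combine F G u w) →
    (∀ v ∈ G.V, v ≠ u → v ≠ w → F (combine F G u w) v = F G v) ∧
    F (combine F G u w) w = F G u + F G w

/-- Edge Multiplication (EM), relative to the domain class `D`. -/
def EM (D : WGraph → Prop) (F : WGraph → ℕ → ℝ) : Prop :=
  ∀ G : WGraph, D G → ∀ u ∈ G.V, ∀ x : ℝ, 0 < x → D (G.scaleOut u x) →
    ∀ v ∈ G.V, F (G.scaleOut u x) v = F G v

/-- Edge Compensation (EC), relative to the domain class `D`. -/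
def EC (D : WGraph → Prop) (F : WGraph → ℕ → ℝ) : Prop :=
  ∀ G : WGraph, D G → ∀ u ∈ G.V, ∀ x : ℝ, 0 < x → D (G.compensate u x) →
    (∀ v ∈ G.V, v ≠ u → F (G.compensate u x) v = F G v) ∧
    F (G.compensate u x) u = F G u / x

/-- Baseline (BL), relative to the domain class `D`. -/
def BL (D : WGraph → Prop) (F : WGraph → ℕ → ℝ) : Prop :=
  ∀ G : WGraph, D G → ∀ v ∈ G.V, (∀ e ∈ G.E, e.1 ≠ v ∧ e.2 ≠ v) → F G v = G.b v

/-- A cycle graph: strongly connected, and every node has exactly one outgoing edge. -/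
def IsCycleGraph (G : WGraph) : Prop :=
  G.StronglyConnected ∧ ∀ v ∈ G.V, (G.E.filter (fun e => e.1 = v)).card = 1

/-- Cycle (CY), relative to the domain class `D`. -/
def CY (D : WGraph → Prop) (F : WGraph → ℕ → ℝ) : Prop :=
  ∀ G : WGraph, D G → IsCycleGraph G → (∀ e ∈ G.E, ∀ e' ∈ G.E, G.c e = G.c e') →
    ∀ v ∈ G.V, F G v = (∑ u ∈ G.V, G.b u) / (G.V.card : ℝ)

/-- The three-node graph used to define the profit function: nodes `{0,1,2}` (as `u,v,w`),
an edge `(u,v)` of weight `y`, an edge `(u,w)` of weight `z-y` if `y < z` (no such edge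
if `y = z`), `b(u) = x` and `b(v) = b(w) = 0`. -/
noncomputable def profitGraph (x y z : ℝ) : WGraph where
  V := {0, 1, 2}
  E := if y < z then {(0, 1), (0, 2)} else {(0, 1)}
  b := fun v => if v = 0 then x else 0
  c := fun e => if e = (0, 1) then y else if e = (0, 2) ∧ y < z then z - y else 0

/-- The profit function `p_F(x,y,z)` of a centrality measure `F`. -/
noncomputable def profit (F : WGraph → ℕ → ℝ) (x y z : ℝ) : ℝ := F (profitGraph x y z) 1

namespace KPProof

open Finset

variable (G : WGraph)

/-- The row-stochastic transition matrix of the distributed process. -/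
noncomputable def P : Matrix {v // v ∈ G.V} {v // v ∈ G.V} ℝ :=
  fun u v => if ((u : ℕ), (v : ℕ)) ∈ G.E then G.c ((u : ℕ), (v : ℕ)) / G.degOut u else 0

/-- The initial weight vector. -/
noncomputable def bvec : {v // v ∈ G.V} → ℝ := fun v => G.b v

/-- The transition operator (right multiplication by `P`). -/
noncomputable def Tend : Module.End ℝ ({v // v ∈ G.V} → ℝ) := (P G).vecMulLinear

variable {G}

lemma degOut_pos (hG : G.InGKP) {u : ℕ} (hu : u ∈ G.V) : 0 < G.degOut u := by
  obtain ⟨t, ω, ⟨ht, hw⟩, h0, -⟩ := hG.2.1 u hu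
  have he : (u, ω 1) ∈ G.E := by have := hw 0 ht; rwa [h0] at this
  exact Finset.sum_pos
    (fun e he' => hG.1.2.2.2.1 e (Finset.mem_filter.mp he').1)
    ⟨(u, ω 1), Finset.mem_filter.mpr ⟨he, rfl⟩⟩

lemma sum_out (hG : G.Valid) (u : ℕ) (f : ℕ × ℕ → ℝ) :
    ∑ v ∈ G.V, (if (u, v) ∈ G.E then f (u, v) else 0)
      = ∑ e ∈ G.E.filter (fun e => e.1 = u), f e := by
  rw [← Finset.sum_filter]
  refine Finset.sum_nbij' (fun v => (u, v)) (fun e => e.2) ?_ ?_ ?_ ?_ ?_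
  · intro v hv
    rw [Finset.mem_filter] at hv ⊢
    exact ⟨hv.2, rfl⟩
  · intro e he
    rw [Finset.mem_filter] at he ⊢
    obtain ⟨he1, he2⟩ := he
    have heq : (u, e.2) = e := by rw [← he2]
    refine ⟨(hG.1 e he1).2, ?_⟩
    rw [heq]; exact he1
  · intro v _; rfl
  · intro e he
    rw [Finset.mem_filter] at he
    rw [← he.2]
  · intro v _; rfl

lemma sum_in (hG : G.Valid) (v : ℕ) (f : ℕ × ℕ → ℝ) :
    ∑ u ∈ G.V, (if (u, v) ∈ G.E then f (u, v) else 0)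
      = ∑ e ∈ G.E.filter (fun e => e.2 = v), f e := by
  rw [← Finset.sum_filter]
  refine Finset.sum_nbij' (fun u => (u, v)) (fun e => e.1) ?_ ?_ ?_ ?_ ?_
  · intro u hu
    rw [Finset.mem_filter] at hu ⊢
    exact ⟨hu.2, rfl⟩
  · intro e he
    rw [Finset.mem_filter] at he ⊢
    obtain ⟨he1, he2⟩ := he
    have heq : (e.1, v) = e := by rw [← he2]
    refine ⟨(hG.1 e he1).1, ?_⟩
    rw [heq]; exact he1
  · intro u _; rfl
  · intro e he
    rw [Finset.mem_filter] at he
    rw [← he.2]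
  · intro u _; rfl

lemma P_nonneg (hG : G.InGKP) (u v : {v // v ∈ G.V}) : 0 ≤ P G u v := by
  unfold P
  split
  · next h =>
    exact le_of_lt (div_pos (hG.1.2.2.2.1 _ h) (degOut_pos hG u.2))
  · exact le_rfl

lemma P_rowSum (hG : G.InGKP) (u : {v // v ∈ G.V}) : ∑ v, P G u v = 1 := by
  have h1 : ∑ v, P G u v
      = ∑ v ∈ G.V, (if ((u : ℕ), v) ∈ G.E then G.c ((u : ℕ), v) / G.degOut u else 0) :=
    Finset.sum_coe_sort G.V (fun v => if ((u : ℕ), v) ∈ G.E then G.c ((u : ℕ), v) / G.degOut u else 0)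
  rw [h1, sum_out hG.1 (u : ℕ) (fun e => G.c e / G.degOut (u : ℕ)), ← Finset.sum_div]
  rw [show (∑ e ∈ G.E.filter (fun e => e.1 = (u : ℕ)), G.c e) = G.degOut u from rfl]
  exact div_self (ne_of_gt (degOut_pos hG u.2))

lemma Ppow_nonneg (hG : G.InGKP) (t : ℕ) (u v : {v // v ∈ G.V}) : 0 ≤ (P G ^ t) u v := by
  induction t generalizing u v with
  | zero => rw [pow_zero]; by_cases h : u = v <;> simp [Matrix.one_apply, h]
  | succ t ih =>
    rw [pow_succ, Matrix.mul_apply]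
    exact Finset.sum_nonneg fun w _ => mul_nonneg (ih u w) (P_nonneg hG w v)

lemma Ppow_rowSum (hG : G.InGKP) (t : ℕ) (u : {v // v ∈ G.V}) : ∑ v, (P G ^ t) u v = 1 := by
  induction t generalizing u with
  | zero => simp [Matrix.one_apply]
  | succ t ih =>
    simp only [pow_succ, Matrix.mul_apply]
    rw [Finset.sum_comm]
    calc ∑ w, ∑ v, (P G ^ t) u w * P G w v
        = ∑ w, (P G ^ t) u w * ∑ v, P G w v := by
          simp [Finset.mul_sum]
      _ = 1 := by simp only [P_rowSum hG, mul_one]; exact ih u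

lemma Ppow_le_one (hG : G.InGKP) (t : ℕ) (u v : {v // v ∈ G.V}) : (P G ^ t) u v ≤ 1 := by
  calc (P G ^ t) u v ≤ ∑ w, (P G ^ t) u w :=
        Finset.single_le_sum (fun w _ => Ppow_nonneg hG t u w) (Finset.mem_univ v)
    _ = 1 := Ppow_rowSum hG t u

lemma vecMul_bound (hG : G.InGKP) (x : {v // v ∈ G.V} → ℝ) (t : ℕ) (v : {v // v ∈ G.V}) :
    |Matrix.vecMul x (P G ^ t) v| ≤ ∑ u, |x u| := by
  have hv : Matrix.vecMul x (P G ^ t) v = ∑ u, x u * (P G ^ t) u v := rfl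
  rw [hv]
  calc |∑ u, x u * (P G ^ t) u v| ≤ ∑ u, |x u * (P G ^ t) u v| :=
        Finset.abs_sum_le_sum_abs _ _
    _ ≤ ∑ u, |x u| := by
        refine Finset.sum_le_sum fun u _ => ?_
        rw [abs_mul]
        calc |x u| * |(P G ^ t) u v| ≤ |x u| * 1 := by
              refine mul_le_mul_of_nonneg_left ?_ (abs_nonneg _)
              rw [abs_of_nonneg (Ppow_nonneg hG t u v)]
              exact Ppow_le_one hG t u v
          _ = |x u| := mul_one _

lemma Tend_apply (x : {v // v ∈ G.V} → ℝ) : Tend G x = Matrix.vecMul x (P G) := by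
  simp [Tend, Matrix.vecMulLinear]

lemma Tend_pow (t : ℕ) (x : {v // v ∈ G.V} → ℝ) :
    (Tend G ^ t) x = Matrix.vecMul x (P G ^ t) := by
  induction t with
  | zero => simp [Matrix.vecMul_one]
  | succ t ih =>
    rw [pow_succ', Module.End.mul_apply, Tend_apply, ih, Matrix.vecMul_vecMul, ← pow_succ]

lemma sum_vecMul (hG : G.InGKP) (x : {v // v ∈ G.V} → ℝ) (t : ℕ) :
    ∑ v, Matrix.vecMul x (P G ^ t) v = ∑ v, x v := by
  have hv : ∀ v, Matrix.vecMul x (P G ^ t) v = ∑ u, x u * (P G ^ t) u v := fun _ => rfl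
  simp only [hv]
  rw [Finset.sum_comm]
  simp only [← Finset.mul_sum, Ppow_rowSum hG, mul_one]

lemma pProc_zero (a : ℝ) {v : ℕ} (hv : v ∈ G.V) : WGraph.pProc a G 0 v = G.b v := by
  unfold WGraph.pProc
  have hset : (Fintype.piFinset (fun _ : Fin 1 => G.V)).filter
      (fun ω => ω (Fin.last 0) = v ∧ ∀ i : Fin 0, (ω i.castSucc, ω i.succ) ∈ G.E)
      = {fun _ => v} := by
    ext ω
    rw [Finset.mem_filter, Finset.mem_singleton, Fintype.mem_piFinset]
    constructor
    · rintro ⟨-, h1, -⟩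
      funext i
      have hi : i = Fin.last 0 := Subsingleton.elim _ _
      rw [hi, h1]
    · rintro rfl
      exact ⟨fun _ => hv, rfl, fun i => i.elim0⟩
  rw [hset, Finset.sum_singleton]
  simp

lemma pProc_succ (hG : G.Valid) (a : ℝ) (t : ℕ) {v : ℕ} (hv : v ∈ G.V) :
    WGraph.pProc a G (t + 1) v
      = ∑ u ∈ G.V, WGraph.pProc a G t u *
          (if (u, v) ∈ G.E then a * G.c (u, v) / G.degOut u else 0) := by
  have step1 :
      (∑ u ∈ G.V, WGraph.pProc a G t u *
          (if (u, v) ∈ G.E then a * G.c (u, v) / G.degOut u else 0))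
        = ∑ ω ∈ (Fintype.piFinset (fun _ : Fin (t + 1) => G.V)).filter
            (fun ω => (∀ i : Fin t, (ω i.castSucc, ω i.succ) ∈ G.E)
              ∧ (ω (Fin.last t), v) ∈ G.E),
            (G.b (ω 0) * ∏ i : Fin t,
                a * G.c (ω i.castSucc, ω i.succ) / G.degOut (ω i.castSucc)) *
              (a * G.c (ω (Fin.last t), v) / G.degOut (ω (Fin.last t))) := by
    calc ∑ u ∈ G.V, WGraph.pProc a G t u *
            (if (u, v) ∈ G.E then a * G.c (u, v) / G.degOut u else 0)
        = ∑ u ∈ G.V, ∑ ω ∈ ((Fintype.piFinset (fun _ : Fin (t + 1) => G.V)).filter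
              (fun ω => ∀ i : Fin t, (ω i.castSucc, ω i.succ) ∈ G.E)).filter
              (fun ω => ω (Fin.last t) = u),
            (G.b (ω 0) * ∏ i : Fin t,
                a * G.c (ω i.castSucc, ω i.succ) / G.degOut (ω i.castSucc)) *
              (if (ω (Fin.last t), v) ∈ G.E then
                a * G.c (ω (Fin.last t), v) / G.degOut (ω (Fin.last t)) else 0) := by
          refine Finset.sum_congr rfl fun u hu => ?_
          rw [WGraph.pProc, Finset.sum_mul]
          have hset : (Fintype.piFinset (fun _ : Fin (t + 1) => G.V)).filter
              (fun ω => ω (Fin.last t) = u ∧ ∀ i : Fin t, (ω i.castSucc, ω i.succ) ∈ G.E)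
              = ((Fintype.piFinset (fun _ : Fin (t + 1) => G.V)).filter
                  (fun ω => ∀ i : Fin t, (ω i.castSucc, ω i.succ) ∈ G.E)).filter
                  (fun ω => ω (Fin.last t) = u) := by
            rw [Finset.filter_filter]
            ext ω
            simp only [Finset.mem_filter]
            tauto
          rw [hset]
          refine Finset.sum_congr rfl fun ω hω => ?_
          have hlast : ω (Fin.last t) = u := (Finset.mem_filter.mp hω).2
          rw [hlast]
      _ = ∑ ω ∈ (Fintype.piFinset (fun _ : Fin (t + 1) => G.V)).filter
              (fun ω => ∀ i : Fin t, (ω i.castSucc, ω i.succ) ∈ G.E),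
            (G.b (ω 0) * ∏ i : Fin t,
                a * G.c (ω i.castSucc, ω i.succ) / G.degOut (ω i.castSucc)) *
              (if (ω (Fin.last t), v) ∈ G.E then
                a * G.c (ω (Fin.last t), v) / G.degOut (ω (Fin.last t)) else 0) := by
          refine Finset.sum_fiberwise_of_maps_to (fun ω hω => ?_) _
          exact (Fintype.mem_piFinset.mp (Finset.mem_filter.mp hω).1) (Fin.last t)
      _ = _ := by
          conv_rhs => rw [← Finset.filter_filter, Finset.sum_filter]
          simp only [mul_ite, mul_zero]
  rw [step1, WGraph.pProc]
  refine Finset.sum_nbij' (fun ω => fun i : Fin (t + 1) => ω i.castSucc)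
    (fun ω' => Fin.snoc ω' v) ?_ ?_ ?_ ?_ ?_
  · intro ω hω
    obtain ⟨hmem, hlast, hwalk⟩ := Finset.mem_filter.mp hω
    rw [Finset.mem_filter, Fintype.mem_piFinset]
    refine ⟨fun i => Fintype.mem_piFinset.mp hmem i.castSucc, fun i => ?_, ?_⟩
    · have := hwalk i.castSucc
      rwa [Fin.succ_castSucc] at this
    · have := hwalk (Fin.last t)
      rwa [Fin.succ_last, hlast] at this
  · intro ω' hω'
    obtain ⟨hmem, hwalk, hedge⟩ := Finset.mem_filter.mp hω'
    rw [Finset.mem_filter, Fintype.mem_piFinset]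
    refine ⟨fun i => ?_, ?_, fun i => ?_⟩
    · refine Fin.lastCases ?_ (fun j => ?_) i
      · simp only [Fin.snoc_last]; exact hv
      · simp only [Fin.snoc_castSucc]; exact Fintype.mem_piFinset.mp hmem j
    · simp only [Fin.snoc_last]
    · refine Fin.lastCases ?_ (fun j => ?_) i
      · simp only [Fin.snoc_castSucc, Fin.succ_last, Fin.snoc_last]
        exact hedge
      · simp only [Fin.succ_castSucc, Fin.snoc_castSucc]
        exact hwalk j
  · intro ω hω
    obtain ⟨hmem, hlast, hwalk⟩ := Finset.mem_filter.mp hω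
    funext i
    refine Fin.lastCases ?_ (fun j => ?_) i
    · simp only [Fin.snoc_last, hlast]
    · simp only [Fin.snoc_castSucc]
  · intro ω' hω'
    funext i
    simp only [Fin.snoc_castSucc]
  · intro ω hω
    obtain ⟨hmem, hlast, hwalk⟩ := Finset.mem_filter.mp hω
    rw [Fin.prod_univ_castSucc]
    simp only [Fin.succ_castSucc, Fin.succ_last, hlast, Fin.castSucc_zero]
    ring

lemma pProc_eq (hG : G.InGKP) (t : ℕ) (v : {v // v ∈ G.V}) :
    WGraph.pProc 1 G t (v : ℕ) = (Tend G ^ t) (bvec G) v := by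
  induction t generalizing v with
  | zero => rw [pProc_zero 1 v.2]; simp [bvec]
  | succ t ih =>
    rw [pProc_succ hG.1 1 t v.2]
    have hmid : ∑ u ∈ G.V, WGraph.pProc 1 G t u *
          (if (u, (v : ℕ)) ∈ G.E then 1 * G.c (u, (v : ℕ)) / G.degOut u else 0)
        = ∑ u : {v // v ∈ G.V}, (Tend G ^ t) (bvec G) u * P G u v := by
      rw [← Finset.sum_coe_sort G.V (fun u => WGraph.pProc 1 G t u *
          (if (u, (v : ℕ)) ∈ G.E then 1 * G.c (u, (v : ℕ)) / G.degOut u else 0))]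
      refine Finset.sum_congr rfl fun u _ => ?_
      rw [ih u]
      congr 1
      unfold P
      simp [one_mul]
    rw [hmid, pow_succ', Module.End.mul_apply, Tend_apply]
    rfl

lemma pProc_mass (hG : G.InGKP) (t : ℕ) :
    ∑ v ∈ G.V, WGraph.pProc 1 G t v = ∑ v ∈ G.V, G.b v := by
  rw [← Finset.sum_coe_sort G.V (WGraph.pProc 1 G t), ← Finset.sum_coe_sort G.V G.b]
  calc ∑ v : {v // v ∈ G.V}, WGraph.pProc 1 G t ↑v
      = ∑ v : {v // v ∈ G.V}, (Tend G ^ t) (bvec G) v :=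
        Finset.sum_congr rfl fun v _ => pProc_eq hG t v
    _ = ∑ v : {v // v ∈ G.V}, bvec G v := by
        simp only [Tend_pow]; exact sum_vecMul hG _ t
    _ = ∑ v : {v // v ∈ G.V}, G.b ↑v := rfl

end KPProof

/-- For every `G ∈ 𝒢^KP`, Katz prestige (defined as a Cesàro limit) satisfies
the recursive equation `KP_v(G) = Σ_{(u,v)∈E} (c(u,v)/deg⁺_u(G))·KP_u(G)` for every node
`v ∈ V`, and moreover `Σ_{v∈V} KP_v(G) = Σ_{v∈V} b(v)`. -/
theorem kp_recursive_equation (G : WGraph) (hG : G.InGKP) :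
    (∀ v ∈ G.V, WGraph.KP G v =
      ∑ e ∈ G.E.filter (fun e => e.2 = v), (G.c e / G.degOut e.1) * WGraph.KP G e.1) ∧
    (∑ v ∈ G.V, WGraph.KP G v) = ∑ v ∈ G.V, G.b v := by
  classical
  set T' : Module.End ℝ ({v // v ∈ G.V} → ℝ) := KPProof.Tend G with hT'
  -- the fixed space and the range of `1 - T'` are complementary
  have hdisj : LinearMap.ker (1 - T') ⊓ LinearMap.range (1 - T') = ⊥ := by
    rw [Submodule.eq_bot_iff]
    rintro x ⟨hxk, hxr⟩
    obtain ⟨y, hy⟩ := hxr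
    have hfix : T' x = x := by
      have h := LinearMap.mem_ker.mp hxk
      rw [LinearMap.sub_apply, Module.End.one_apply, sub_eq_zero] at h
      exact h.symm
    have hpowfix : ∀ n : ℕ, (T' ^ n) x = x := by
      intro n
      induction n with
      | zero => simp
      | succ n ih => rw [pow_succ, Module.End.mul_apply, hfix, ih]
    have hx : x = y - T' y := by
      rw [← hy, LinearMap.sub_apply, Module.End.one_apply]
    have hsum : ∀ n : ℕ, (n : ℝ) • x = y - (T' ^ n) y := by
      intro n
      have h1 : ∑ t ∈ Finset.range n, (T' ^ t) x = (n : ℝ) • x := by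
        simp only [hpowfix, Finset.sum_const, Finset.card_range]
        rw [Nat.cast_smul_eq_nsmul]
      have h2 : ∑ t ∈ Finset.range n, (T' ^ t) x = y - (T' ^ n) y := by
        calc ∑ t ∈ Finset.range n, (T' ^ t) x
            = ∑ t ∈ Finset.range n, ((T' ^ t) y - (T' ^ (t + 1)) y) := by
              refine Finset.sum_congr rfl fun t _ => ?_
              rw [hx, map_sub, pow_succ, Module.End.mul_apply]
          _ = (T' ^ 0) y - (T' ^ n) y := Finset.sum_range_sub' (fun t => (T' ^ t) y) n
          _ = y - (T' ^ n) y := by simp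
      rw [← h1, h2]
    funext v
    show x v = 0
    by_contra hne
    have hpos : 0 < |x v| := abs_pos.mpr hne
    have hb : ∀ n : ℕ, (n : ℝ) * |x v| ≤ |y v| + ∑ u, |y u| := by
      intro n
      have hcf := congrFun (hsum n) v
      have hcf' : (n : ℝ) * x v = y v - ((T' ^ n) y) v := by
        simpa [Pi.smul_apply, smul_eq_mul] using hcf
      calc (n : ℝ) * |x v| = |(n : ℝ) * x v| := by
            rw [abs_mul, Nat.abs_cast]
        _ = |y v - ((T' ^ n) y) v| := by rw [hcf']
        _ ≤ |y v| + |((T' ^ n) y) v| := abs_sub _ _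
        _ ≤ |y v| + ∑ u, |y u| := by
            refine add_le_add_right ?_ _
            rw [hT', KPProof.Tend_pow]
            exact KPProof.vecMul_bound hG y n v
    obtain ⟨n, hn⟩ := exists_nat_gt ((|y v| + ∑ u, |y u|) / |x v|)
    rw [div_lt_iff₀ hpos] at hn
    have := hb n
    linarith
  have hsup : LinearMap.ker (1 - T') ⊔ LinearMap.range (1 - T') = ⊤ := by
    apply Submodule.eq_top_of_finrank_eq
    have h1 := Submodule.finrank_sup_add_finrank_inf_eq
      (LinearMap.ker (1 - T')) (LinearMap.range (1 - T'))
    rw [hdisj, finrank_bot, add_zero] at h1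
    have h2 := LinearMap.finrank_range_add_finrank_ker (1 - T')
    omega
  have hmem : KPProof.bvec G ∈ LinearMap.ker (1 - T') ⊔ LinearMap.range (1 - T') := by
    rw [hsup]; exact Submodule.mem_top
  obtain ⟨f, hfK, g, hgR, hfg⟩ := Submodule.mem_sup.mp hmem
  obtain ⟨y, hy⟩ := hgR
  have hTf : T' f = f := by
    have h := LinearMap.mem_ker.mp hfK
    rw [LinearMap.sub_apply, Module.End.one_apply, sub_eq_zero] at h
    exact h.symm
  have hTfn : ∀ n : ℕ, (T' ^ n) f = f := by
    intro n
    induction n with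
    | zero => simp
    | succ n ih => rw [pow_succ, Module.End.mul_apply, hTf, ih]
  have hgy : g = y - T' y := by
    rw [← hy, LinearMap.sub_apply, Module.End.one_apply]
  have hsum : ∀ n : ℕ, ∑ t ∈ Finset.range (n + 1), (T' ^ t) (KPProof.bvec G)
      = (((n : ℝ) + 1)) • f + (y - (T' ^ (n + 1)) y) := by
    intro n
    have hbv : KPProof.bvec G = f + g := hfg.symm
    calc ∑ t ∈ Finset.range (n + 1), (T' ^ t) (KPProof.bvec G)
        = ∑ t ∈ Finset.range (n + 1), ((T' ^ t) f + (T' ^ t) g) := by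
          refine Finset.sum_congr rfl fun t _ => ?_
          rw [hbv, map_add]
      _ = (∑ t ∈ Finset.range (n + 1), (T' ^ t) f)
            + ∑ t ∈ Finset.range (n + 1), (T' ^ t) g := Finset.sum_add_distrib
      _ = (((n : ℝ) + 1)) • f + (y - (T' ^ (n + 1)) y) := by
          congr 1
          · simp only [hTfn, Finset.sum_const, Finset.card_range]
            rw [← Nat.cast_smul_eq_nsmul ℝ (n + 1) f]
            push_cast
            ring_nf
          · calc ∑ t ∈ Finset.range (n + 1), (T' ^ t) g
                = ∑ t ∈ Finset.range (n + 1), ((T' ^ t) y - (T' ^ (t + 1)) y) := by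
                  refine Finset.sum_congr rfl fun t _ => ?_
                  rw [hgy, map_sub, pow_succ, Module.End.mul_apply]
              _ = (T' ^ 0) y - (T' ^ (n + 1)) y :=
                  Finset.sum_range_sub' (fun t => (T' ^ t) y) (n + 1)
              _ = y - (T' ^ (n + 1)) y := by simp
  have hC : ∀ (n : ℕ) (v : {v // v ∈ G.V}), |((T' ^ n) y) v| ≤ ∑ u, |y u| := by
    intro n v
    rw [hT', KPProof.Tend_pow]
    exact KPProof.vecMul_bound hG y n v
  -- componentwise convergence of the Cesàro averages
  have htends : ∀ v : {v // v ∈ G.V},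
      Tendsto (fun n : ℕ => (∑ t ∈ Finset.range (n + 1), WGraph.pProc 1 G t (v : ℕ)) / (n : ℝ))
        atTop (nhds (f v)) := by
    intro v
    have heq : ∀ n : ℕ, (∑ t ∈ Finset.range (n + 1), WGraph.pProc 1 G t (v : ℕ))
        = ((n : ℝ) + 1) * f v + (y v - ((T' ^ (n + 1)) y) v) := by
      intro n
      calc ∑ t ∈ Finset.range (n + 1), WGraph.pProc 1 G t (v : ℕ)
          = ∑ t ∈ Finset.range (n + 1), ((T' ^ t) (KPProof.bvec G)) v :=
            Finset.sum_congr rfl fun t _ => KPProof.pProc_eq hG t v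
        _ = (∑ t ∈ Finset.range (n + 1), (T' ^ t) (KPProof.bvec G)) v :=
            (Finset.sum_apply v _ _).symm
        _ = ((n : ℝ) + 1) * f v + (y v - ((T' ^ (n + 1)) y) v) := by
            rw [hsum n]
            simp [Pi.smul_apply, smul_eq_mul]
    have hsmall : Tendsto
        (fun n : ℕ => (f v + (y v - ((T' ^ (n + 1)) y) v)) / (n : ℝ)) atTop (nhds 0) := by
      refine squeeze_zero_norm (a := fun n : ℕ => (|f v| + (|y v| + ∑ u, |y u|)) / (n : ℝ))
        (fun n => ?_) (tendsto_const_div_atTop_nhds_zero_nat _)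
      rw [Real.norm_eq_abs, abs_div, Nat.abs_cast]
      refine div_le_div_of_nonneg_right ?_ (Nat.cast_nonneg n)
      calc |f v + (y v - ((T' ^ (n + 1)) y) v)|
            ≤ |f v| + |y v - ((T' ^ (n + 1)) y) v| := abs_add_le _ _
          _ ≤ |f v| + (|y v| + |((T' ^ (n + 1)) y) v|) := by
              exact add_le_add_right (abs_sub _ _) _
          _ ≤ |f v| + (|y v| + ∑ u, |y u|) := by
              exact add_le_add_right (add_le_add_right (hC (n + 1) v) _) _
    have hlim : Tendsto
        (fun n : ℕ => f v + (f v + (y v - ((T' ^ (n + 1)) y) v)) / (n : ℝ))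
        atTop (nhds (f v)) := by
      have := (tendsto_const_nhds (x := f v) (f := atTop (α := ℕ))).add hsmall
      simpa using this
    refine hlim.congr' ?_
    filter_upwards [eventually_ge_atTop 1] with n hn
    have hn0 : (n : ℝ) ≠ 0 := Nat.cast_ne_zero.mpr (by omega)
    rw [heq n]
    field_simp
    ring
  have hKP : ∀ v : {v // v ∈ G.V}, WGraph.KP G (v : ℕ) = f v := by
    intro v
    rw [WGraph.KP]
    exact (htends v).limUnder_eq
  constructor
  · -- the recursive equation
    intro v hv
    calc WGraph.KP G v = f ⟨v, hv⟩ := hKP ⟨v, hv⟩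
      _ = ∑ u : {u // u ∈ G.V}, f u * KPProof.P G u ⟨v, hv⟩ := by
          conv_lhs => rw [← hTf]
          rw [hT', KPProof.Tend_apply]
          rfl
      _ = ∑ u ∈ G.V, (if (u, v) ∈ G.E then
            (G.c (u, v) / G.degOut u) * WGraph.KP G u else 0) := by
          rw [← Finset.sum_coe_sort G.V (fun u => if (u, v) ∈ G.E then
            (G.c (u, v) / G.degOut u) * WGraph.KP G u else 0)]
          refine Finset.sum_congr rfl fun u _ => ?_
          rw [← hKP u]
          unfold KPProof.P
          rw [mul_ite, mul_zero]
          split <;> [ring; rfl]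
      _ = ∑ e ∈ G.E.filter (fun e => e.2 = v), (G.c e / G.degOut e.1) * WGraph.KP G e.1 :=
          KPProof.sum_in hG.1 v (fun e => (G.c e / G.degOut e.1) * WGraph.KP G e.1)
  · -- total mass
    have h1 : Tendsto (fun n : ℕ => ∑ v : {v // v ∈ G.V},
          (∑ t ∈ Finset.range (n + 1), WGraph.pProc 1 G t (v : ℕ)) / (n : ℝ))
        atTop (nhds (∑ v : {v // v ∈ G.V}, f v)) :=
      tendsto_finset_sum _ (fun v _ => htends v)
    have hmass : ∀ n : ℕ, ∑ v : {v // v ∈ G.V},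
          (∑ t ∈ Finset.range (n + 1), WGraph.pProc 1 G t (v : ℕ)) / (n : ℝ)
        = ((n : ℝ) + 1) * (∑ v ∈ G.V, G.b v) / (n : ℝ) := by
      intro n
      rw [← Finset.sum_div]
      congr 1
      rw [Finset.sum_comm]
      calc ∑ t ∈ Finset.range (n + 1), ∑ v : {v // v ∈ G.V}, WGraph.pProc 1 G t (v : ℕ)
          = ∑ t ∈ Finset.range (n + 1), ∑ v ∈ G.V, G.b v := by
            refine Finset.sum_congr rfl fun t _ => ?_
            rw [Finset.sum_coe_sort G.V (WGraph.pProc 1 G t)]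
            exact KPProof.pProc_mass hG t
        _ = ((n : ℝ) + 1) * (∑ v ∈ G.V, G.b v) := by
            rw [Finset.sum_const, Finset.card_range, nsmul_eq_mul]
            push_cast
            ring
    have h2 : Tendsto (fun n : ℕ => ∑ v : {v // v ∈ G.V},
          (∑ t ∈ Finset.range (n + 1), WGraph.pProc 1 G t (v : ℕ)) / (n : ℝ))
        atTop (nhds (∑ v ∈ G.V, G.b v)) := by
      have hlim : Tendsto (fun n : ℕ => (∑ v ∈ G.V, G.b v) + (∑ v ∈ G.V, G.b v) / (n : ℝ))
          atTop (nhds (∑ v ∈ G.V, G.b v)) := by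
        have := (tendsto_const_nhds (x := ∑ v ∈ G.V, G.b v) (f := atTop (α := ℕ))).add
          (tendsto_const_div_atTop_nhds_zero_nat (∑ v ∈ G.V, G.b v))
        simpa using this
      refine hlim.congr' ?_
      filter_upwards [eventually_ge_atTop 1] with n hn
      have hn0 : (n : ℝ) ≠ 0 := Nat.cast_ne_zero.mpr (by omega)
      rw [hmass n]
      field_simp
    have hfsum : ∑ v : {v // v ∈ G.V}, f v = ∑ v ∈ G.V, G.b v :=
      tendsto_nhds_unique h1 h2
    calc ∑ v ∈ G.V, WGraph.KP G v
        = ∑ v : {v // v ∈ G.V}, WGraph.KP G (v : ℕ) :=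
          (Finset.sum_coe_sort G.V (WGraph.KP G)).symm
      _ = ∑ v : {v // v ∈ G.V}, f v := Finset.sum_congr rfl fun v _ => hKP v
      _ = ∑ v ∈ G.V, G.b v := hfsum
end

section
/- For every graph G=(V,E,b,c)∈𝒢^EV that is out-regular, Eigenvector centrality and Katz prestige coincide: EV_v(G)=KP_v(G) for every node v∈V. -/
open Filter

attribute [local instance] Classical.propDecidable

open Matrix in
/-- Column sum of the adjacency matrix equals the out-degree. -/
lemma colSum_adj (G : WGraph) (hval : G.Valid) (v : {u // u ∈ G.V}) :
    ∑ u : {u // u ∈ G.V}, G.adjMatrix u v = G.degOut v := by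
  unfold WGraph.adjMatrix WGraph.degOut
  rw [Finset.sum_coe_sort G.V (fun u => if ((v : ℕ), u) ∈ G.E then G.c ((v : ℕ), u) else 0)]
  rw [← Finset.sum_filter]
  refine Finset.sum_nbij' (fun u => ((v : ℕ), u)) (fun e => e.2) ?_ ?_ ?_ ?_ ?_
  · intro a ha
    simp only [Finset.mem_filter] at ha
    exact Finset.mem_filter.mpr ⟨ha.2, rfl⟩
  · intro e he
    simp only [Finset.mem_filter] at he
    refine Finset.mem_filter.mpr ⟨(hval.1 e he.1).2, ?_⟩
    rw [show ((v : ℕ), e.2) = e from Prod.ext he.2.symm rfl]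
    exact he.1
  · intro a ha; rfl
  · intro e he
    simp only [Finset.mem_filter] at he
    exact Prod.ext he.2.symm rfl
  · intro a ha; rfl

open Matrix in
/-- For a valid graph whose nodes all have out-degree `x > 0`, the principal
eigenvalue is `x` (provided `V` is nonempty). -/
lemma principalEig_of_regular (G : WGraph) (hval : G.Valid) {x : ℝ} (hx : 0 < x)
    (hreg : ∀ v ∈ G.V, G.degOut v = x) (hne : G.V.Nonempty) :
    G.principalEig = x := by
  have hNE : Nonempty {u // u ∈ G.V} := ⟨⟨hne.choose, hne.choose_spec⟩⟩
  have hAnn : ∀ u v : {u // u ∈ G.V}, 0 ≤ G.adjMatrix u v := by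
    intro u v
    unfold WGraph.adjMatrix
    split
    · exact le_of_lt (hval.2.2.2.1 _ ‹_›)
    · exact le_rfl
  have hcol : ∀ v : {u // u ∈ G.V}, ∑ u : {u // u ∈ G.V}, G.adjMatrix u v = x := by
    intro v
    rw [colSum_adj G hval v]
    exact hreg v v.2
  -- x is an eigenvalue
  have hdetT : ((G.adjMatrix - x • (1 : Matrix _ _ ℝ))ᵀ).det = 0 := by
    rw [← Matrix.exists_mulVec_eq_zero_iff]
    refine ⟨fun _ => 1, ?_, ?_⟩
    · intro h
      have := congrFun h (Classical.arbitrary _)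
      simp at this
    · funext v
      simp only [Matrix.transpose_sub, Matrix.transpose_smul, Matrix.transpose_one,
        Matrix.sub_mulVec, Matrix.smul_mulVec, Matrix.one_mulVec]
      have : G.adjMatrixᵀ.mulVec (fun _ => (1 : ℝ)) v = x := by
        unfold Matrix.mulVec dotProduct
        simp only [Matrix.transpose_apply, mul_one]
        exact hcol v
      simp [this]
  have hdet : (G.adjMatrix - x • (1 : Matrix _ _ ℝ)).det = 0 := by
    rw [← Matrix.det_transpose]; exact hdetT
  obtain ⟨y, hy0, hy⟩ := (Matrix.exists_mulVec_eq_zero_iff).mpr hdet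
  have hyeig : G.adjMatrix.mulVec y = x • y := by
    rw [Matrix.sub_mulVec, Matrix.smul_mulVec, Matrix.one_mulVec, sub_eq_zero] at hy
    exact hy
  -- every eigenvalue is at most x
  have hub : ∀ r ∈ {r : ℝ | ∃ z : {u // u ∈ G.V} → ℝ, z ≠ 0 ∧
      G.adjMatrix.mulVec z = r • z}, r ≤ x := by
    rintro r ⟨z, hz0, hz⟩
    set s : ℝ := ∑ u : {u // u ∈ G.V}, |z u| with hs
    have hspos : 0 < s := by
      have : ∃ u, z u ≠ 0 := Function.ne_iff.mp hz0
      obtain ⟨u, hu⟩ := this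
      have h1 : 0 < |z u| := abs_pos.mpr hu
      have h2 : ∀ w : {u // u ∈ G.V}, 0 ≤ |z w| := fun w => abs_nonneg _
      exact Finset.sum_pos' (fun w _ => h2 w) ⟨u, Finset.mem_univ u, h1⟩
    have key : |r| * s ≤ x * s := by
      have h1 : ∀ u : {u // u ∈ G.V}, |r * z u| ≤
          ∑ v : {u // u ∈ G.V}, G.adjMatrix u v * |z v| := by
        intro u
        have := congrFun hz u
        simp only [Matrix.mulVec, dotProduct, Pi.smul_apply, smul_eq_mul] at this
        rw [← this]
        calc |∑ v : {u // u ∈ G.V}, G.adjMatrix u v * z v|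
            ≤ ∑ v : {u // u ∈ G.V}, |G.adjMatrix u v * z v| := Finset.abs_sum_le_sum_abs _ _
          _ = ∑ v : {u // u ∈ G.V}, G.adjMatrix u v * |z v| := by
              refine Finset.sum_congr rfl fun v _ => ?_
              rw [abs_mul, abs_of_nonneg (hAnn u v)]
      calc |r| * s = ∑ u : {u // u ∈ G.V}, |r * z u| := by
            rw [Finset.mul_sum]
            exact Finset.sum_congr rfl fun u _ => (abs_mul r (z u)).symm
        _ ≤ ∑ u : {u // u ∈ G.V}, ∑ v : {u // u ∈ G.V}, G.adjMatrix u v * |z v| :=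
            Finset.sum_le_sum fun u _ => h1 u
        _ = ∑ v : {u // u ∈ G.V}, (∑ u : {u // u ∈ G.V}, G.adjMatrix u v) * |z v| := by
            rw [Finset.sum_comm]
            exact Finset.sum_congr rfl fun v _ => (Finset.sum_mul _ _ _).symm
        _ = ∑ v : {u // u ∈ G.V}, x * |z v| := by
            exact Finset.sum_congr rfl fun v _ => by rw [hcol v]
        _ = x * s := by rw [Finset.mul_sum]
    have := le_of_mul_le_mul_right key hspos
    exact le_trans (le_abs_self r) this
  unfold WGraph.principalEig
  exact IsGreatest.csSup_eq ⟨⟨y, hy0, hyeig⟩, hub⟩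

/-- For every out-regular graph `G ∈ 𝒢^EV`, Eigenvector centrality and
Katz prestige coincide. -/
theorem ev_eq_kp_on_out_regular (G : WGraph) (hG : G.InGEV) (hreg : G.OutRegular) :
    ∀ v ∈ G.V, WGraph.EV G v = WGraph.KP G v := by
  intro v hv
  obtain ⟨x, hx, hdeg⟩ := hreg
  have hval : G.Valid := hG.1.1
  have heig : G.principalEig = x :=
    principalEig_of_regular G hval hx hdeg ⟨v, hv⟩
  have key : ∀ t, WGraph.wProc (1 / G.principalEig) G t v = WGraph.pProc 1 G t v := by
    intro t
    unfold WGraph.wProc WGraph.pProc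
    refine Finset.sum_congr rfl fun ω hω => ?_
    simp only [Finset.mem_filter, Fintype.mem_piFinset] at hω
    congr 1
    refine Finset.prod_congr rfl fun i _ => ?_
    rw [heig, hdeg _ (hω.1 i.castSucc)]
    field_simp
  unfold WGraph.EV WGraph.KP
  congr 1
  funext T
  congr 1
  exact Finset.sum_congr rfl fun t _ => key t
end
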